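/- Let K = {x ∈ {0,1}^n : Ax ≤ b} be a TOMKS, let {C₁,…,C_k} be a multi-cover for K with |C_h| ≥ 2 for every h, let α ∈ ℤ^n be an MCI coefficient vector for {C₁,…,C_k}, and set β := max_{h∈{1,…,k}} α(C_h) − 1. Then the extended MCI Σ_{i∈{1,…,n}\C} ( max{α_{2,C_h} : h ∈ {1,…,k}, i < min(C_h)} ) x_i + Σ_{i=1}^n α_i x_i ≤ β, where a maximum over an empty index set is taken to be 0, is valid for K: every x ∈ {0,1}^n with Ax ≤ b satisfies it. -/

import Mathlib

open Finset

/-- `S₁` dominates `S₂`: there is an injection `f : S₂ → S₁` with `f i ≤ i`. -/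
def Dominates {n : ℕ} (S₁ S₂ : Finset (Fin n)) : Prop :=
  ∃ f : Fin n → Fin n, Set.InjOn f (S₂ : Set (Fin n)) ∧ ∀ i ∈ S₂, f i ∈ S₁ ∧ f i ≤ i

/-- Columns of `A` are componentwise non-increasing. -/
def ColsOrdered {m n : ℕ} (A : Fin m → Fin n → ℕ) : Prop :=
  ∀ j : Fin m, ∀ i i' : Fin n, i ≤ i' → A j i' ≤ A j i

/-- `S` is a cover for the multiple knapsack set given by `A, b`. -/
def IsCover {m n : ℕ} (A : Fin m → Fin n → ℕ) (b : Fin m → ℕ) (S : Finset (Fin n)) : Prop :=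
  ∃ j : Fin m, b j < ∑ i ∈ S, A j i

/-- Minimal cover: a cover none of whose proper subsets is a cover. -/
def IsMinimalCover {m n : ℕ} (A : Fin m → Fin n → ℕ) (b : Fin m → ℕ)
    (S : Finset (Fin n)) : Prop :=
  IsCover A b S ∧ ∀ S' ⊂ S, ¬ IsCover A b S'

/-- The union `C = ∪ₕ Cₕ`. -/
def unionC {n k : ℕ} (C : Fin k → Finset (Fin n)) : Finset (Fin n) :=
  Finset.univ.sup C

/-- The intersection `C₀ = ∩ₕ Cₕ`. -/
def interC {n k : ℕ} (C : Fin k → Finset (Fin n)) : Finset (Fin n) :=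
  Finset.univ.inf C

/-- `{C₁,…,C_k}` is a multi-cover for the TOMKS given by `A, b`. -/
def MultiCover {m n k : ℕ} (A : Fin m → Fin n → ℕ) (b : Fin m → ℕ)
    (C : Fin k → Finset (Fin n)) : Prop :=
  (∀ h, IsCover A b (C h)) ∧
  ∀ T ⊆ unionC C \ interC C, (∀ h, T ≠ C h \ interC C) →
    ∃ h, Dominates T (C h \ interC C) ∨ Dominates (C h \ interC C) T

/-- Max of `g` over `S`, with the empty maximum taken to be `0`. -/
def fmax {ι : Type*} (S : Finset ι) (g : ι → ℤ) : ℤ :=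
  if h : S.Nonempty then S.sup' h g else 0

/-- Min of `g` over `S`, with the empty minimum taken to be `0`. -/
def fmin {ι : Type*} (S : Finset ι) (g : ι → ℤ) : ℤ :=
  if h : S.Nonempty then S.inf' h g else 0

/-- `α` is an MCI coefficient vector for the family of covers `C`. -/
def IsMCICoeff {n k : ℕ} (C : Fin k → Finset (Fin n)) (α : Fin n → ℤ) : Prop :=
  (∀ i, i ∉ unionC C → α i = 0) ∧
  (∀ i ∈ unionC C \ interC C, (∀ j ∈ unionC C \ interC C, j ≤ i) → α i = 1) ∧
  (∀ i ∈ unionC C \ interC C, (∃ j ∈ unionC C \ interC C, i < j) →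
    ∀ h : Fin k, i ∈ C h →
      1 + fmax ((unionC C \ C h).filter (fun ℓ => i < ℓ)) α ≤ α i) ∧
  (∀ j ∈ interC C, ∃ h : Fin k,
    max (fmax ((unionC C \ C h).filter (fun ℓ => ℓ < j)) α)
        (1 + ∑ ℓ ∈ (unionC C \ C h).filter (fun ℓ => j < ℓ), α ℓ) ≤ α j)

/-- `α` is the S-MCI coefficient vector for the family of covers `C`. -/
def IsSMCICoeff {n k : ℕ} (C : Fin k → Finset (Fin n)) (α : Fin n → ℤ) : Prop :=
  (∀ i, i ∉ unionC C → α i = 0) ∧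
  (∀ i ∈ unionC C \ interC C,
    α i = 1 + fmax (Finset.univ.filter (fun h : Fin k => i ∈ C h))
        (fun h => fmax ((unionC C \ C h).filter (fun ℓ => i < ℓ)) α)) ∧
  (∀ j ∈ interC C,
    α j = fmin (Finset.univ : Finset (Fin k))
        (fun h => max (fmax ((unionC C \ C h).filter (fun ℓ => ℓ < j)) α)
            (1 + ∑ ℓ ∈ (unionC C \ C h).filter (fun ℓ => j < ℓ), α ℓ)))

/-- Second-smallest value of the multiset `{α i : i ∈ D}` (for `|D| ≥ 2`). -/
def secondMin {n : ℕ} (α : Fin n → ℤ) (D : Finset (Fin n)) : ℤ :=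
  fmax D (fun j => fmin (D.erase j) α)

/-- `πᵀ x ≤ 1` is a non-trivial facet-defining inequality for `conv(K)`. -/
def IsNontrivialFacet {m n : ℕ} (A : Fin m → Fin n → ℕ) (b : Fin m → ℕ)
    (pv : Fin n → ℝ) : Prop :=
  (∀ i, 0 ≤ pv i) ∧
  (∃ i j : Fin n, i ≠ j ∧ pv i ≠ 0 ∧ pv j ≠ 0) ∧
  (∀ x : Fin n → ℝ, (∀ i, x i = 0 ∨ x i = 1) →
    (∀ j, ∑ i, (A j i : ℝ) * x i ≤ (b j : ℝ)) → ∑ i, pv i * x i ≤ 1) ∧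
  (∃ pts : Fin n → (Fin n → ℝ), AffineIndependent ℝ pts ∧
    ∀ ℓ, (∀ i, pts ℓ i = 0 ∨ pts ℓ i = 1) ∧
      (∀ j, ∑ i, (A j i : ℝ) * pts ℓ i ≤ (b j : ℝ)) ∧
      ∑ i, pv i * pts ℓ i = 1)

/-- `S` is a cover for the single knapsack set given by `a, b`. -/
def IsCoverK {n : ℕ} (a : Fin n → ℕ) (b : ℕ) (S : Finset (Fin n)) : Prop :=
  b < ∑ i ∈ S, a i

/-- Minimal cover for a single knapsack set. -/
def IsMinimalCoverK {n : ℕ} (a : Fin n → ℕ) (b : ℕ) (S : Finset (Fin n)) : Prop :=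
  IsCoverK a b S ∧ ∀ S' ⊂ S, ¬ IsCoverK a b S'

section AuxLemmas

variable {m n k : ℕ}

lemma subset_unionC (C : Fin k → Finset (Fin n)) (h : Fin k) : C h ⊆ unionC C :=
  Finset.le_iff_subset.mp (Finset.le_sup (Finset.mem_univ h))

lemma interC_subset (C : Fin k → Finset (Fin n)) (h : Fin k) : interC C ⊆ C h :=
  Finset.le_iff_subset.mp (Finset.inf_le (Finset.mem_univ h))

lemma mem_unionC {C : Fin k → Finset (Fin n)} {i : Fin n} (hi : i ∈ unionC C) :
    ∃ h, i ∈ C h := by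
  simpa [unionC, Finset.mem_sup] using hi

lemma le_fmax {ι : Type*} {S : Finset ι} (g : ι → ℤ) {a : ι} (ha : a ∈ S) : g a ≤ fmax S g := by
  rw [fmax, dif_pos ⟨a, ha⟩]; exact Finset.le_sup' g ha

lemma fmin_le {ι : Type*} {S : Finset ι} (g : ι → ℤ) {a : ι} (ha : a ∈ S) : fmin S g ≤ g a := by
  rw [fmin, dif_pos ⟨a, ha⟩]; exact Finset.inf'_le g ha

lemma sdiff_inter_mem {C : Fin k → Finset (Fin n)} {i : Fin n} {h : Fin k}
    (hi : i ∈ unionC C \ C h) : i ∈ unionC C \ interC C := by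
  rcases Finset.mem_sdiff.mp hi with ⟨h1, h2⟩
  exact Finset.mem_sdiff.mpr ⟨h1, fun hc => h2 (interC_subset C h hc)⟩

lemma alpha_pos {C : Fin k → Finset (Fin n)} {α : Fin n → ℤ} (hα : IsMCICoeff C α) :
    ∀ i ∈ unionC C, 1 ≤ α i := by
  have diffcase : ∀ N : ℕ, ∀ i ∈ unionC C \ interC C,
      ((unionC C \ interC C).filter (fun j => i < j)).card ≤ N → 1 ≤ α i := by
    intro N
    induction N with
    | zero =>
      intro i hi hc
      have hemp : (unionC C \ interC C).filter (fun j => i < j) = ∅ :=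
        Finset.card_eq_zero.mp (Nat.le_zero.mp hc)
      have hle : ∀ j ∈ unionC C \ interC C, j ≤ i := by
        intro j hj
        by_contra hlt
        have : j ∈ (unionC C \ interC C).filter (fun j => i < j) :=
          Finset.mem_filter.mpr ⟨hj, not_le.mp hlt⟩
        simp [hemp] at this
      exact le_of_eq (hα.2.1 i hi hle).symm
    | succ N ih =>
      intro i hi hc
      by_cases hex : ∃ j ∈ unionC C \ interC C, i < j
      · obtain ⟨h, hih⟩ := mem_unionC (Finset.mem_sdiff.mp hi).1
        have h3 := hα.2.2.1 i hi hex h hih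
        rcases Finset.eq_empty_or_nonempty ((unionC C \ C h).filter (fun ℓ => i < ℓ)) with hF | hF
        · rw [hF] at h3; simp [fmax] at h3; linarith
        · obtain ⟨ℓ, hℓ⟩ := hF
          have hℓ2 := Finset.mem_filter.mp hℓ
          have hℓdiff : ℓ ∈ unionC C \ interC C := sdiff_inter_mem hℓ2.1
          have hcard' : ((unionC C \ interC C).filter (fun j => ℓ < j)).card ≤ N := by
            have hss : (unionC C \ interC C).filter (fun j => ℓ < j) ⊂
                (unionC C \ interC C).filter (fun j => i < j) := by
              constructor
              · intro x hx
                rcases Finset.mem_filter.mp hx with ⟨hx1, hx2⟩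
                exact Finset.mem_filter.mpr ⟨hx1, lt_trans hℓ2.2 hx2⟩
              · intro hsub
                have : ℓ ∈ (unionC C \ interC C).filter (fun j => ℓ < j) :=
                  hsub (Finset.mem_filter.mpr ⟨hℓdiff, hℓ2.2⟩)
                exact lt_irrefl ℓ (Finset.mem_filter.mp this).2
            have := Finset.card_lt_card hss
            omega
          have h1 := ih ℓ hℓdiff hcard'
          have h2 : (1:ℤ) ≤ fmax ((unionC C \ C h).filter (fun ℓ => i < ℓ)) α :=
            le_trans h1 (le_fmax α hℓ)
          linarith
      · push_neg at hex
        exact le_of_eq (hα.2.1 i hi hex).symm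
  intro i hi
  by_cases h0 : i ∈ interC C
  · obtain ⟨h, h4⟩ := hα.2.2.2 i h0
    have hsum : 0 ≤ ∑ ℓ ∈ (unionC C \ C h).filter (fun ℓ => i < ℓ), α ℓ := by
      apply Finset.sum_nonneg
      intro ℓ hℓ
      have : ℓ ∈ unionC C \ interC C := sdiff_inter_mem (Finset.mem_filter.mp hℓ).1
      linarith [diffcase _ ℓ this le_rfl]
    have := le_trans (le_max_right _ _) h4
    linarith
  · exact diffcase _ i (Finset.mem_sdiff.mpr ⟨hi, h0⟩) le_rfl

lemma secondMin_le {α : Fin n → ℤ} {D : Finset (Fin n)} {j j' : Fin n}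
    (hj : j ∈ D) (hj' : j' ∈ D) (hne : j' ≠ j) (hle : α j' ≤ α j) :
    secondMin α D ≤ α j := by
  rw [secondMin, fmax, dif_pos ⟨j, hj⟩]
  apply Finset.sup'_le
  intro j'' hj''
  by_cases hcase : j'' = j
  · subst hcase
    exact le_trans (fmin_le α (Finset.mem_erase.mpr ⟨hne, hj'⟩)) hle
  · exact fmin_le α (Finset.mem_erase.mpr ⟨fun e => hcase e.symm, hj⟩)

end AuxLemmas
section InjLemma
variable {n : ℕ}

lemma exists_good_inj {T D : Finset (Fin n)} (hdom : Dominates D T) :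
    ∃ f : Fin n → Fin n, Set.InjOn f (T : Set (Fin n)) ∧ (∀ i ∈ T, f i ∈ D ∧ f i ≤ i) ∧
      ∀ i ∈ T, i ∈ D → f i = i := by
  obtain ⟨f0, hinj0, hf0⟩ := hdom
  suffices H : ∀ N : ℕ, ∀ f : Fin n → Fin n, Set.InjOn f (T : Set (Fin n)) →
      (∀ i ∈ T, f i ∈ D ∧ f i ≤ i) →
      (T.filter (fun i => i ∈ D ∧ f i ≠ i)).card ≤ N →
      ∃ g : Fin n → Fin n, Set.InjOn g (T : Set (Fin n)) ∧ (∀ i ∈ T, g i ∈ D ∧ g i ≤ i) ∧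
        ∀ i ∈ T, i ∈ D → g i = i by
    exact H _ f0 hinj0 hf0 le_rfl
  intro N
  induction N with
  | zero =>
    intro f hinj hf hc
    refine ⟨f, hinj, hf, ?_⟩
    intro i hiT hiD
    by_contra hne
    have hmem : i ∈ T.filter (fun i => i ∈ D ∧ f i ≠ i) :=
      Finset.mem_filter.mpr ⟨hiT, hiD, hne⟩
    have := Finset.card_pos.mpr ⟨i, hmem⟩
    omega
  | succ N ih =>
    intro f hinj hf hc
    rcases Finset.eq_empty_or_nonempty (T.filter (fun i => i ∈ D ∧ f i ≠ i)) with hB | hB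
    · refine ⟨f, hinj, hf, ?_⟩
      intro i hiT hiD
      by_contra hne
      have hmem : i ∈ T.filter (fun i => i ∈ D ∧ f i ≠ i) :=
        Finset.mem_filter.mpr ⟨hiT, hiD, hne⟩
      rw [hB] at hmem
      simp at hmem
    · obtain ⟨j, hj⟩ := hB
      obtain ⟨hjT, hjD, hjne⟩ : j ∈ T ∧ j ∈ D ∧ f j ≠ j := by
        have := Finset.mem_filter.mp hj
        exact ⟨this.1, this.2.1, this.2.2⟩
      by_cases hpre : ∃ i ∈ T, f i = j
      · obtain ⟨i, hiT, hfi⟩ := hpre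
        have hij : i ≠ j := by rintro rfl; exact hjne hfi
        have hji : j ≤ i := by rw [← hfi]; exact (hf i hiT).2
        set g : Fin n → Fin n := fun x => f (Equiv.swap i j x) with hg
        have hgj : g j = j := by simp [hg, Equiv.swap_apply_right, hfi]
        have hgi : g i = f j := by simp [hg, Equiv.swap_apply_left]
        have hgo : ∀ x, x ≠ i → x ≠ j → g x = f x := by
          intro x h1 h2; simp [hg, Equiv.swap_apply_of_ne_of_ne h1 h2]
        have hswapT : ∀ x ∈ T, Equiv.swap i j x ∈ T := by
          intro x hx
          rcases eq_or_ne x i with rfl | h1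
          · simpa [Equiv.swap_apply_left] using hjT
          rcases eq_or_ne x j with rfl | h2
          · simpa [Equiv.swap_apply_right] using hiT
          · simpa [Equiv.swap_apply_of_ne_of_ne h1 h2] using hx
        have hginj : Set.InjOn g (T : Set (Fin n)) := by
          intro x hx y hy hxy
          have hx' : Equiv.swap i j x ∈ T := hswapT x hx
          have hy' : Equiv.swap i j y ∈ T := hswapT y hy
          have : Equiv.swap i j x = Equiv.swap i j y := hinj hx' hy' hxy
          exact (Equiv.swap i j).injective this
        have hgb : ∀ x ∈ T, g x ∈ D ∧ g x ≤ x := by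
          intro x hx
          rcases eq_or_ne x i with rfl | h1
          · rw [hgi]
            exact ⟨(hf j hjT).1, le_trans (hf j hjT).2 hji⟩
          rcases eq_or_ne x j with rfl | h2
          · rw [hgj]; exact ⟨hjD, le_refl _⟩
          · rw [hgo x h1 h2]; exact hf x hx
        apply ih g hginj hgb
        have hsub : T.filter (fun x => x ∈ D ∧ g x ≠ x) ⊆
            (T.filter (fun x => x ∈ D ∧ f x ≠ x)).erase j := by
          intro x hx
          obtain ⟨hxT, hxD, hxne⟩ : x ∈ T ∧ x ∈ D ∧ g x ≠ x := by
            have := Finset.mem_filter.mp hx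
            exact ⟨this.1, this.2.1, this.2.2⟩
          have hxj : x ≠ j := by rintro rfl; exact hxne hgj
          refine Finset.mem_erase.mpr ⟨hxj, Finset.mem_filter.mpr ⟨hxT, hxD, ?_⟩⟩
          rcases eq_or_ne x i with rfl | h1
          · rw [hfi]; exact hij.symm
          · rw [← hgo x h1 hxj]; exact hxne
        have hle := Finset.card_le_card hsub
        have := Finset.card_erase_of_mem hj
        omega
      · push_neg at hpre
        set g : Fin n → Fin n := Function.update f j j with hg
        have hgj : g j = j := by simp [hg]
        have hgo : ∀ x, x ≠ j → g x = f x := by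
          intro x h1; simp [hg, Function.update_of_ne h1]
        have hginj : Set.InjOn g (T : Set (Fin n)) := by
          intro x hx y hy hxy
          by_cases hxj : x = j <;> by_cases hyj : y = j
          · rw [hxj, hyj]
          · rw [hxj, hgj, hgo y hyj] at hxy
            exact absurd hxy.symm (hpre y hy)
          · rw [hyj, hgj, hgo x hxj] at hxy
            exact absurd hxy (hpre x hx)
          · rw [hgo x hxj, hgo y hyj] at hxy
            exact hinj hx hy hxy
        have hgb : ∀ x ∈ T, g x ∈ D ∧ g x ≤ x := by
          intro x hx
          rcases eq_or_ne x j with rfl | hxj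
          · rw [hgj]; exact ⟨hjD, le_refl _⟩
          · rw [hgo x hxj]; exact hf x hx
        apply ih g hginj hgb
        have hsub : T.filter (fun x => x ∈ D ∧ g x ≠ x) ⊆
            (T.filter (fun x => x ∈ D ∧ f x ≠ x)).erase j := by
          intro x hx
          obtain ⟨hxT, hxD, hxne⟩ : x ∈ T ∧ x ∈ D ∧ g x ≠ x := by
            have := Finset.mem_filter.mp hx
            exact ⟨this.1, this.2.1, this.2.2⟩
          have hxj : x ≠ j := by rintro rfl; exact hxne hgj
          refine Finset.mem_erase.mpr ⟨hxj, Finset.mem_filter.mpr ⟨hxT, hxD, ?_⟩⟩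
          rw [← hgo x hxj]; exact hxne
        have hle := Finset.card_le_card hsub
        have := Finset.card_erase_of_mem hj
        omega

end InjLemma
section MainMCI
variable {m n k : ℕ}

lemma cover_int {A : Fin m → Fin n → ℕ} {b : Fin m → ℕ} {S : Finset (Fin n)}
    (h : IsCover A b S) : ∃ j, (b j : ℤ) < ∑ i ∈ S, (A j i : ℤ) := by
  obtain ⟨j, hj⟩ := h
  exact ⟨j, by exact_mod_cast hj⟩

lemma sum_A_mono {A : Fin m → Fin n → ℕ} (hA : ColsOrdered A) {S E : Finset (Fin n)}
    {F : Fin n → Fin n} (hinj : Set.InjOn F (E : Set (Fin n)))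
    (hF : ∀ i ∈ E, F i ∈ S ∧ F i ≤ i) (j : Fin m) :
    (∑ i ∈ E, (A j i : ℤ)) ≤ ∑ i ∈ S, (A j i : ℤ) := by
  have h1 : (∑ i ∈ E, (A j i : ℤ)) ≤ ∑ i ∈ E, (A j (F i) : ℤ) := by
    apply Finset.sum_le_sum
    intro i hi
    exact_mod_cast hA j (F i) i (hF i hi).2
  have h2 : ∑ i ∈ E, (A j (F i) : ℤ) = ∑ i ∈ E.image F, (A j i : ℤ) := by
    rw [Finset.sum_image (fun x hx y hy hxy => hinj hx hy hxy)]
  have h3 : E.image F ⊆ S := by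
    intro x hx
    obtain ⟨i, hi, rfl⟩ := Finset.mem_image.mp hx
    exact (hF i hi).1
  have h4 : ∑ i ∈ E.image F, (A j i : ℤ) ≤ ∑ i ∈ S, (A j i : ℤ) :=
    Finset.sum_le_sum_of_subset_of_nonneg h3 (fun i _ _ => by positivity)
  linarith

lemma main_base (hk : 0 < k) (A : Fin m → Fin n → ℕ) (b : Fin m → ℕ)
    (hA : ColsOrdered A) (C : Fin k → Finset (Fin n)) (hmc : MultiCover A b C)
    (α : Fin n → ℤ) (hα : IsMCICoeff C α)
    (W : Finset (Fin n)) (hWC : W ⊆ unionC C) (hCW : interC C ⊆ W)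
    (hnc : ∀ j, (∑ i ∈ W, (A j i : ℤ)) ≤ (b j : ℤ)) :
    ∑ i ∈ W, α i ≤ fmax (Finset.univ : Finset (Fin k)) (fun h => ∑ i ∈ C h, α i) - 1 := by
  have hnotsub : ∀ h : Fin k, ¬ C h ⊆ W := by
    intro h hsub
    obtain ⟨j, hj⟩ := cover_int (hmc.1 h)
    have : (∑ i ∈ C h, (A j i : ℤ)) ≤ ∑ i ∈ W, (A j i : ℤ) :=
      Finset.sum_le_sum_of_subset_of_nonneg hsub (fun i _ _ => by positivity)
    linarith [hnc j]
  set T := W \ interC C with hTdef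
  have hTsub : T ⊆ unionC C \ interC C := by
    intro x hx
    rcases Finset.mem_sdiff.mp hx with ⟨h1, h2⟩
    exact Finset.mem_sdiff.mpr ⟨hWC h1, h2⟩
  have hTne : ∀ h, T ≠ C h \ interC C := by
    intro h he
    apply hnotsub h
    intro c hc
    by_cases hc0 : c ∈ interC C
    · exact hCW hc0
    · have : c ∈ C h \ interC C := Finset.mem_sdiff.mpr ⟨hc, hc0⟩
      rw [← he] at this
      exact (Finset.mem_sdiff.mp this).1
  obtain ⟨h, hdom⟩ := hmc.2 T hTsub hTne
  rcases hdom with hdom | hdom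
  · -- T dominates C h \ interC : contradiction, W would be a cover
    exfalso
    obtain ⟨f, hinj, hf⟩ := hdom
    set F : Fin n → Fin n := fun x => if x ∈ interC C then x else f x with hF
    have hFprop : ∀ i ∈ C h, F i ∈ W ∧ F i ≤ i := by
      intro i hi
      by_cases hi0 : i ∈ interC C
      · simp only [hF, if_pos hi0]
        exact ⟨hCW hi0, le_refl _⟩
      · have hiD : i ∈ C h \ interC C := Finset.mem_sdiff.mpr ⟨hi, hi0⟩
        simp only [hF, if_neg hi0]
        refine ⟨?_, (hf i hiD).2⟩
        have : f i ∈ T := (hf i hiD).1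
        exact (Finset.mem_sdiff.mp this).1
    have hFinj : Set.InjOn F ((C h : Set (Fin n))) := by
      intro x hx y hy hxy
      by_cases hx0 : x ∈ interC C <;> by_cases hy0 : y ∈ interC C
      · simpa [hF, if_pos hx0, if_pos hy0] using hxy
      · exfalso
        simp only [hF, if_pos hx0, if_neg hy0] at hxy
        have hyD : y ∈ C h \ interC C := Finset.mem_sdiff.mpr ⟨hy, hy0⟩
        have : f y ∈ T := (hf y hyD).1
        rw [← hxy] at this
        exact (Finset.mem_sdiff.mp this).2 hx0
      · exfalso
        simp only [hF, if_neg hx0, if_pos hy0] at hxy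
        have hxD : x ∈ C h \ interC C := Finset.mem_sdiff.mpr ⟨hx, hx0⟩
        have : f x ∈ T := (hf x hxD).1
        rw [hxy] at this
        exact (Finset.mem_sdiff.mp this).2 hy0
      · simp only [hF, if_neg hx0, if_neg hy0] at hxy
        have hxD : x ∈ C h \ interC C := Finset.mem_sdiff.mpr ⟨hx, hx0⟩
        have hyD : y ∈ C h \ interC C := Finset.mem_sdiff.mpr ⟨hy, hy0⟩
        exact hinj (by exact_mod_cast hxD) (by exact_mod_cast hyD) hxy
    obtain ⟨j, hj⟩ := cover_int (hmc.1 h)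
    have := sum_A_mono hA hFinj hFprop j
    linarith [hnc j]
  · -- C h \ interC dominates T : the α bound
    obtain ⟨f, hinj, hf, hfix⟩ := exists_good_inj hdom
    set D := C h \ interC C with hDdef
    have hDsub : D ⊆ unionC C \ interC C := by
      intro x hx
      rcases Finset.mem_sdiff.mp hx with ⟨h1, h2⟩
      exact Finset.mem_sdiff.mpr ⟨subset_unionC C h h1, h2⟩
    have hpos := alpha_pos hα
    have key : ∑ i ∈ T, α i ≤ ∑ i ∈ D, α i - 1 := by
      by_cases hTD : (T \ D).Nonempty
      · have hstep : ∀ i ∈ T, i ∉ D → α i + 1 ≤ α (f i) := by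
          intro i hiT hiD
          have hfiD := (hf i hiT).1
          have hfiD' : i ∉ C h := by
            intro hih
            exact hiD (Finset.mem_sdiff.mpr ⟨hih, (Finset.mem_sdiff.mp (hTsub hiT)).2⟩)
          have hilt : f i < i :=
            lt_of_le_of_ne (hf i hiT).2 (fun e => hiD (by rw [← e]; exact hfiD))
          have h3 := hα.2.2.1 (f i) (hDsub hfiD) ⟨i, hTsub hiT, hilt⟩ h
            (Finset.mem_sdiff.mp hfiD).1
          have h5 : α i ≤ fmax ((unionC C \ C h).filter (fun ℓ => f i < ℓ)) α := by
            apply le_fmax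
            exact Finset.mem_filter.mpr
              ⟨Finset.mem_sdiff.mpr ⟨(Finset.mem_sdiff.mp (hTsub hiT)).1, hfiD'⟩, hilt⟩
          linarith
        have e1 : ∑ i ∈ T, α (f i) = ∑ i ∈ T.image f, α i := by
          rw [Finset.sum_image (fun x hx y hy hxy => hinj hx hy hxy)]
        have e2 : T.image f ⊆ D := by
          intro x hx
          obtain ⟨i, hi, rfl⟩ := Finset.mem_image.mp hx
          exact (hf i hi).1
        have e3 : ∑ i ∈ T.image f, α i ≤ ∑ i ∈ D, α i :=
          Finset.sum_le_sum_of_subset_of_nonneg e2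
            (fun i hiD _ => le_trans zero_le_one (hpos i ((Finset.mem_sdiff.mp (hDsub hiD)).1)))
        have e4 : ((T \ D).card : ℤ) ≤ ∑ i ∈ T, (α (f i) - α i) := by
          rw [← Finset.sum_inter_add_sum_sdiff T D (fun i => α (f i) - α i)]
          have p1 : ∑ i ∈ T ∩ D, (α (f i) - α i) = 0 := by
            apply Finset.sum_eq_zero
            intro i hi
            rcases Finset.mem_inter.mp hi with ⟨h1, h2⟩
            rw [hfix i h1 h2]
            ring
          have p2 : ((T \ D).card : ℤ) ≤ ∑ i ∈ T \ D, (α (f i) - α i) := by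
            calc ((T \ D).card : ℤ) = ∑ _i ∈ T \ D, (1 : ℤ) := by simp
            _ ≤ ∑ i ∈ T \ D, (α (f i) - α i) := by
                apply Finset.sum_le_sum
                intro i hi
                rcases Finset.mem_sdiff.mp hi with ⟨h1, h2⟩
                linarith [hstep i h1 h2]
          linarith
        have e5 : (1:ℤ) ≤ ((T \ D).card : ℤ) := by
          exact_mod_cast Finset.card_pos.mpr hTD
        have e6 : ∑ i ∈ T, α i = ∑ i ∈ T, α (f i) - ∑ i ∈ T, (α (f i) - α i) := by
          rw [Finset.sum_sub_distrib]
          ring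
        linarith
      · have hTsubD : T ⊆ D := by
          rw [Finset.not_nonempty_iff_eq_empty, Finset.sdiff_eq_empty_iff_subset] at hTD
          exact hTD
        have hTssD : T ⊂ D := lt_of_le_of_ne hTsubD (hTne h)
        obtain ⟨d, hdD, hdT⟩ := Finset.exists_of_ssubset hTssD
        have hsub' : T ⊆ D.erase d := by
          intro x hx
          exact Finset.mem_erase.mpr ⟨fun e => hdT (e ▸ hx), hTsubD hx⟩
        have e1 : ∑ i ∈ T, α i ≤ ∑ i ∈ D.erase d, α i :=
          Finset.sum_le_sum_of_subset_of_nonneg hsub'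
            (fun i hi _ => le_trans zero_le_one
              (hpos i ((Finset.mem_sdiff.mp (hDsub (Finset.mem_of_mem_erase hi))).1)))
        have e2 : ∑ i ∈ D.erase d, α i + α d = ∑ i ∈ D, α i :=
          Finset.sum_erase_add D α hdD
        have e3 : 1 ≤ α d := hpos d ((Finset.mem_sdiff.mp (hDsub hdD)).1)
        linarith
    have hW1 : ∑ i ∈ W ∩ interC C, α i + ∑ i ∈ W \ interC C, α i = ∑ i ∈ W, α i :=
      Finset.sum_inter_add_sum_sdiff W (interC C) α
    have hW2 : W ∩ interC C = interC C := Finset.inter_eq_right.mpr hCW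
    have hC1 : ∑ i ∈ C h ∩ interC C, α i + ∑ i ∈ C h \ interC C, α i = ∑ i ∈ C h, α i :=
      Finset.sum_inter_add_sum_sdiff (C h) (interC C) α
    have hC2 : C h ∩ interC C = interC C := Finset.inter_eq_right.mpr (interC_subset C h)
    have hfm : ∑ i ∈ C h, α i ≤ fmax (Finset.univ : Finset (Fin k)) (fun h => ∑ i ∈ C h, α i) :=
      le_fmax _ (Finset.mem_univ h)
    rw [hW2] at hW1
    rw [hC2] at hC1
    linarith

end MainMCI
section MainMCI2
variable {m n k : ℕ}

lemma main_MCI (hk : 0 < k) (A : Fin m → Fin n → ℕ) (b : Fin m → ℕ)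
    (hA : ColsOrdered A) (C : Fin k → Finset (Fin n)) (hmc : MultiCover A b C)
    (α : Fin n → ℤ) (hα : IsMCICoeff C α)
    (W : Finset (Fin n)) (hWC : W ⊆ unionC C)
    (hnc : ∀ j, (∑ i ∈ W, (A j i : ℤ)) ≤ (b j : ℤ)) :
    ∑ i ∈ W, α i ≤ fmax (Finset.univ : Finset (Fin k)) (fun h => ∑ i ∈ C h, α i) - 1 := by
  suffices H : ∀ N : ℕ, ∀ W : Finset (Fin n), W ⊆ unionC C →
      (∀ j, (∑ i ∈ W, (A j i : ℤ)) ≤ (b j : ℤ)) → (interC C \ W).card ≤ N →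
      ∑ i ∈ W, α i ≤ fmax (Finset.univ : Finset (Fin k)) (fun h => ∑ i ∈ C h, α i) - 1 by
    exact H _ W hWC hnc le_rfl
  have hpos := alpha_pos hα
  intro N
  induction N with
  | zero =>
    intro W hWC hnc hcard
    have hsub : interC C ⊆ W :=
      Finset.sdiff_eq_empty_iff_subset.mp (Finset.card_eq_zero.mp (Nat.le_zero.mp hcard))
    exact main_base hk A b hA C hmc α hα W hWC hsub hnc
  | succ N ih =>
    intro W hWC hnc hcard
    by_cases hsub : interC C ⊆ W
    · exact main_base hk A b hA C hmc α hα W hWC hsub hnc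
    · obtain ⟨js, hjsI, hjsW⟩ := Finset.not_subset.mp hsub
      obtain ⟨h, h4⟩ := hα.2.2.2 js hjsI
      have hjsCh : js ∈ C h := interC_subset C h hjsI
      have hjsU : js ∈ unionC C := subset_unionC C h hjsCh
      by_cases hswap : ∃ ℓ ∈ W, ℓ ∉ C h ∧ ℓ < js
      · obtain ⟨l0, hl0W, hl0Ch, hl0lt⟩ := hswap
        have hl0U : l0 ∈ unionC C := hWC hl0W
        have hl0I : l0 ∉ interC C := fun hc => hl0Ch (interC_subset C h hc)
        set W' := insert js (W.erase l0) with hW'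
        have hjsE : js ∉ W.erase l0 := fun hc => hjsW (Finset.mem_of_mem_erase hc)
        have hW'C : W' ⊆ unionC C := by
          intro x hx
          rcases Finset.mem_insert.mp hx with rfl | hx
          · exact hjsU
          · exact hWC (Finset.mem_of_mem_erase hx)
        have hnc' : ∀ j, (∑ i ∈ W', (A j i : ℤ)) ≤ (b j : ℤ) := by
          intro j
          have e1 : ∑ i ∈ W', (A j i : ℤ) = (A j js : ℤ) + ∑ i ∈ W.erase l0, (A j i : ℤ) :=
            Finset.sum_insert hjsE
          have e2 : ∑ i ∈ W.erase l0, (A j i : ℤ) + (A j l0 : ℤ) = ∑ i ∈ W, (A j i : ℤ) :=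
            Finset.sum_erase_add W _ hl0W
          have e3 : (A j js : ℤ) ≤ (A j l0 : ℤ) := by
            exact_mod_cast hA j l0 js (le_of_lt hl0lt)
          linarith [hnc j]
        have hcard' : (interC C \ W').card ≤ N := by
          have he : interC C \ W' = (interC C \ W).erase js := by
            ext x
            by_cases hxl : x = l0
            · subst hxl
              simp [hW', hl0I]
            · simp only [hW', Finset.mem_sdiff, Finset.mem_insert, Finset.mem_erase]
              push_neg
              constructor
              · rintro ⟨hx1, hx2, hx3⟩
                exact ⟨hx2, hx1, hx3 hxl⟩
              · rintro ⟨hx1, hx2, hx3⟩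
                exact ⟨hx2, hx1, fun _ => hx3⟩
          rw [he, Finset.card_erase_of_mem (Finset.mem_sdiff.mpr ⟨hjsI, hjsW⟩)]
          omega
        have hIH := ih W' hW'C hnc' hcard'
        have hαle : α l0 ≤ α js := by
          have hmem : l0 ∈ (unionC C \ C h).filter (fun ℓ => ℓ < js) :=
            Finset.mem_filter.mpr ⟨Finset.mem_sdiff.mpr ⟨hl0U, hl0Ch⟩, hl0lt⟩
          exact le_trans (le_trans (le_fmax α hmem) (le_max_left _ _)) h4
        have e1 : ∑ i ∈ W', α i = α js + ∑ i ∈ W.erase l0, α i := Finset.sum_insert hjsE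
        have e2 : ∑ i ∈ W.erase l0, α i + α l0 = ∑ i ∈ W, α i :=
          Finset.sum_erase_add W α hl0W
        linarith
      · push_neg at hswap
        have h1 : ∑ i ∈ W ∩ C h, α i + ∑ i ∈ W \ C h, α i = ∑ i ∈ W, α i :=
          Finset.sum_inter_add_sum_sdiff W (C h) α
        have h2 : ∑ i ∈ W ∩ C h, α i ≤ ∑ i ∈ C h, α i - α js := by
          have hss : W ∩ C h ⊆ (C h).erase js := by
            intro x hx
            rcases Finset.mem_inter.mp hx with ⟨hx1, hx2⟩
            exact Finset.mem_erase.mpr ⟨fun e => hjsW (e ▸ hx1), hx2⟩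
          have e1 : ∑ i ∈ W ∩ C h, α i ≤ ∑ i ∈ (C h).erase js, α i :=
            Finset.sum_le_sum_of_subset_of_nonneg hss
              (fun i hi _ => le_trans zero_le_one
                (hpos i (subset_unionC C h (Finset.mem_of_mem_erase hi))))
          have e2 : ∑ i ∈ (C h).erase js, α i + α js = ∑ i ∈ C h, α i :=
            Finset.sum_erase_add (C h) α hjsCh
          linarith
        have h3 : ∑ i ∈ W \ C h, α i ≤ ∑ i ∈ (unionC C \ C h).filter (fun ℓ => js < ℓ), α i := by
          apply Finset.sum_le_sum_of_subset_of_nonneg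
          · intro x hx
            rcases Finset.mem_sdiff.mp hx with ⟨hx1, hx2⟩
            refine Finset.mem_filter.mpr ⟨Finset.mem_sdiff.mpr ⟨hWC hx1, hx2⟩, ?_⟩
            exact lt_of_le_of_ne (hswap x hx1 hx2) (fun e => hjsW (e ▸ hx1))
          · intro i hi _
            exact le_trans zero_le_one
              (hpos i (Finset.mem_sdiff.mp (Finset.mem_filter.mp hi).1).1)
        have h5 : 1 + ∑ ℓ ∈ (unionC C \ C h).filter (fun ℓ => js < ℓ), α ℓ ≤ α js :=
          le_trans (le_max_right _ _) h4
        have h6 : ∑ i ∈ C h, α i ≤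
            fmax (Finset.univ : Finset (Fin k)) (fun h => ∑ i ∈ C h, α i) :=
          le_fmax _ (Finset.mem_univ h)
        linarith

end MainMCI2
section ExtLemma
variable {m n k : ℕ}

lemma ext_lemma (hk : 0 < k) (A : Fin m → Fin n → ℕ) (b : Fin m → ℕ)
    (hA : ColsOrdered A) (C : Fin k → Finset (Fin n)) (hmc : MultiCover A b C)
    (α : Fin n → ℤ) (hα : IsMCICoeff C α)
    (ext : Fin n → ℤ)
    (hext : ∀ i, ext i =
      fmax (Finset.univ.filter (fun h : Fin k => ∀ j ∈ C h, i < j))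
        (fun h => secondMin α (C h))) :
    ∀ N : ℕ, ∀ S : Finset (Fin n), (S \ unionC C).card ≤ N →
      (∀ j, (∑ i ∈ S, (A j i : ℤ)) ≤ (b j : ℤ)) →
      (∑ i ∈ S \ unionC C, ext i) + ∑ i ∈ S ∩ unionC C, α i ≤
        fmax (Finset.univ : Finset (Fin k)) (fun h => ∑ i ∈ C h, α i) - 1 := by
  have base : ∀ S : Finset (Fin n), S ⊆ unionC C →
      (∀ j, (∑ i ∈ S, (A j i : ℤ)) ≤ (b j : ℤ)) →
      (∑ i ∈ S \ unionC C, ext i) + ∑ i ∈ S ∩ unionC C, α i ≤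
        fmax (Finset.univ : Finset (Fin k)) (fun h => ∑ i ∈ C h, α i) - 1 := by
    intro S hsub hnc
    have h1 : S \ unionC C = ∅ := Finset.sdiff_eq_empty_iff_subset.mpr hsub
    have h2 : S ∩ unionC C = S := Finset.inter_eq_left.mpr hsub
    rw [h1, h2, Finset.sum_empty, zero_add]
    exact main_MCI hk A b hA C hmc α hα S hsub hnc
  intro N
  induction N with
  | zero =>
    intro S hcard hnc
    exact base S (Finset.sdiff_eq_empty_iff_subset.mp
      (Finset.card_eq_zero.mp (Nat.le_zero.mp hcard))) hnc
  | succ N ih =>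
    intro S hcard hnc
    rcases Finset.eq_empty_or_nonempty (S \ unionC C) with hE | hE
    · exact base S (Finset.sdiff_eq_empty_iff_subset.mp hE) hnc
    · obtain ⟨i, hi⟩ := hE
      obtain ⟨hiS, hiC⟩ := Finset.mem_sdiff.mp hi
      rcases Finset.eq_empty_or_nonempty
        (Finset.univ.filter (fun h : Fin k => ∀ j ∈ C h, i < j)) with hΦ | hΦ
      · -- ext i = 0, just drop i
        have hexti : ext i = 0 := by
          rw [hext i, hΦ]
          simp [fmax]
        set S' := S.erase i with hS'
        have hnc' : ∀ j, (∑ x ∈ S', (A j x : ℤ)) ≤ (b j : ℤ) := by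
          intro j
          have e2 : ∑ x ∈ S.erase i, (A j x : ℤ) + (A j i : ℤ) = ∑ x ∈ S, (A j x : ℤ) :=
            Finset.sum_erase_add S _ hiS
          have : (0:ℤ) ≤ (A j i : ℤ) := by positivity
          linarith [hnc j]
        have hsd : S' \ unionC C = (S \ unionC C).erase i := by
          rw [hS', Finset.erase_sdiff_comm]
        have hcard' : (S' \ unionC C).card ≤ N := by
          rw [hsd, Finset.card_erase_of_mem hi]
          omega
        have hint : S' ∩ unionC C = S ∩ unionC C := by
          ext x
          simp only [hS', Finset.mem_inter, Finset.mem_erase]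
          constructor
          · rintro ⟨⟨_, hx1⟩, hx2⟩
            exact ⟨hx1, hx2⟩
          · rintro ⟨hx1, hx2⟩
            exact ⟨⟨fun e => hiC (e ▸ hx2), hx1⟩, hx2⟩
        have hIH := ih S' hcard' hnc'
        rw [hsd, hint] at hIH
        have he : ∑ x ∈ (S \ unionC C).erase i, ext x + ext i = ∑ x ∈ S \ unionC C, ext x :=
          Finset.sum_erase_add _ ext hi
        linarith
      · obtain ⟨h0, hh0, hval⟩ := Finset.exists_mem_eq_sup' hΦ (fun h => secondMin α (C h))
        have hexti : ext i = secondMin α (C h0) := by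
          rw [hext i, fmax, dif_pos hΦ]
          exact hval
        have himin : ∀ c ∈ C h0, i < c := by
          have := Finset.mem_filter.mp hh0
          exact this.2
        -- swapping i for any j' ∈ C h0 \ S keeps feasibility
        have hswapnc : ∀ j', j' ∈ C h0 → j' ∉ S →
            ∀ r, (∑ x ∈ insert j' (S.erase i), (A r x : ℤ)) ≤ (b r : ℤ) := by
          intro j' hj'C hj'S r
          have hj'E : j' ∉ S.erase i := fun hc => hj'S (Finset.mem_of_mem_erase hc)
          have e1 : ∑ x ∈ insert j' (S.erase i), (A r x : ℤ) =
              (A r j' : ℤ) + ∑ x ∈ S.erase i, (A r x : ℤ) := Finset.sum_insert hj'E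
          have e2 : ∑ x ∈ S.erase i, (A r x : ℤ) + (A r i : ℤ) = ∑ x ∈ S, (A r x : ℤ) :=
            Finset.sum_erase_add S _ hiS
          have e3 : (A r j' : ℤ) ≤ (A r i : ℤ) := by
            exact_mod_cast hA r i j' (le_of_lt (himin j' hj'C))
          linarith [hnc r]
        -- C h0 \ S has at least two elements
        have h2 : 1 < (C h0 \ S).card := by
          have hne0 : (C h0 \ S).Nonempty := by
            rw [← Finset.card_pos]
            by_contra hc
            have hsub0 : C h0 ⊆ S := Finset.sdiff_eq_empty_iff_subset.mp
              (Finset.card_eq_zero.mp (Nat.le_zero.mp (Nat.not_lt.mp (fun h => hc h))))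
            obtain ⟨r, hr⟩ := cover_int (hmc.1 h0)
            have : (∑ x ∈ C h0, (A r x : ℤ)) ≤ ∑ x ∈ S, (A r x : ℤ) :=
              Finset.sum_le_sum_of_subset_of_nonneg hsub0 (fun x _ _ => by positivity)
            linarith [hnc r]
          have hne1 : (C h0 \ S).card ≠ 1 := by
            intro h1
            obtain ⟨j', hj'⟩ := Finset.card_eq_one.mp h1
            have hj'mem : j' ∈ C h0 ∧ j' ∉ S := by
              have : j' ∈ C h0 \ S := by rw [hj']; exact Finset.mem_singleton_self j'
              exact Finset.mem_sdiff.mp this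
            have hsub' : C h0 ⊆ insert j' (S.erase i) := by
              intro c hc
              by_cases hcS : c ∈ S
              · exact Finset.mem_insert.mpr (Or.inr
                  (Finset.mem_erase.mpr ⟨(himin c hc).ne', hcS⟩))
              · have : c ∈ C h0 \ S := Finset.mem_sdiff.mpr ⟨hc, hcS⟩
                rw [hj'] at this
                rw [Finset.mem_singleton.mp this]
                exact Finset.mem_insert_self j' _
            obtain ⟨r, hr⟩ := cover_int (hmc.1 h0)
            have h5 : (∑ x ∈ C h0, (A r x : ℤ)) ≤ ∑ x ∈ insert j' (S.erase i), (A r x : ℤ) :=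
              Finset.sum_le_sum_of_subset_of_nonneg hsub' (fun x _ _ => by positivity)
            linarith [hswapnc j' hj'mem.1 hj'mem.2 r]
          have := Finset.card_pos.mpr hne0
          omega
        obtain ⟨j1, hj1, j2, hj2, hne12⟩ := Finset.one_lt_card.mp h2
        have step : ∀ j', j' ∈ C h0 \ S → secondMin α (C h0) ≤ α j' →
            (∑ x ∈ S \ unionC C, ext x) + ∑ x ∈ S ∩ unionC C, α x ≤
              fmax (Finset.univ : Finset (Fin k)) (fun h => ∑ i ∈ C h, α i) - 1 := by
          intro j' hj' hsm
          obtain ⟨hj'C, hj'S⟩ := Finset.mem_sdiff.mp hj'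
          have hj'U : j' ∈ unionC C := subset_unionC C h0 hj'C
          set S' := insert j' (S.erase i) with hS'
          have hS'nc := hswapnc j' hj'C hj'S
          have hsd : S' \ unionC C = (S \ unionC C).erase i := by
            ext x
            simp only [hS', Finset.mem_sdiff, Finset.mem_insert, Finset.mem_erase]
            constructor
            · rintro ⟨hx1, hx2⟩
              rcases hx1 with rfl | ⟨hx3, hx4⟩
              · exact absurd hj'U hx2
              · exact ⟨hx3, hx4, hx2⟩
            · rintro ⟨hx1, hx2, hx3⟩
              exact ⟨Or.inr ⟨hx1, hx2⟩, hx3⟩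
          have hcard' : (S' \ unionC C).card ≤ N := by
            rw [hsd, Finset.card_erase_of_mem hi]
            omega
          have hint : S' ∩ unionC C = insert j' (S ∩ unionC C) := by
            ext x
            simp only [hS', Finset.mem_inter, Finset.mem_insert, Finset.mem_erase]
            constructor
            · rintro ⟨hx1, hx2⟩
              rcases hx1 with rfl | ⟨hx3, hx4⟩
              · exact Or.inl rfl
              · exact Or.inr ⟨hx4, hx2⟩
            · rintro (rfl | ⟨hx1, hx2⟩)
              · exact ⟨Or.inl rfl, hj'U⟩
              · exact ⟨Or.inr ⟨fun e => hiC (e ▸ hx2), hx1⟩, hx2⟩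
          have hIH := ih S' hcard' hS'nc
          rw [hsd, hint] at hIH
          have hj'nm : j' ∉ S ∩ unionC C := fun hc => hj'S (Finset.mem_inter.mp hc).1
          rw [Finset.sum_insert hj'nm] at hIH
          have he : ∑ x ∈ (S \ unionC C).erase i, ext x + ext i = ∑ x ∈ S \ unionC C, ext x :=
            Finset.sum_erase_add _ ext hi
          rw [hexti] at he
          linarith
        rcases le_total (α j2) (α j1) with hle | hle
        · exact step j1 hj1 (secondMin_le (Finset.mem_sdiff.mp hj1).1
            (Finset.mem_sdiff.mp hj2).1 (Ne.symm hne12) hle)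
        · exact step j2 hj2 (secondMin_le (Finset.mem_sdiff.mp hj2).1
            (Finset.mem_sdiff.mp hj1).1 hne12 hle)

end ExtLemma

/-- validity of the extended MCI for the TOMKS `K`. -/
theorem emci_valid {m n k : ℕ} (hk : 0 < k)
    (A : Fin m → Fin n → ℕ) (b : Fin m → ℕ) (hA : ColsOrdered A)
    (C : Fin k → Finset (Fin n)) (hcard : ∀ h, 2 ≤ (C h).card)
    (hmc : MultiCover A b C)
    (α : Fin n → ℤ) (hα : IsMCICoeff C α)
    (β : ℤ) (hβ : β = fmax (Finset.univ : Finset (Fin k)) (fun h => ∑ i ∈ C h, α i) - 1)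
    (ext : Fin n → ℤ)
    (hext : ∀ i, ext i =
      fmax (Finset.univ.filter (fun h : Fin k => ∀ j ∈ C h, i < j))
        (fun h => secondMin α (C h)))
    (x : Fin n → ℤ) (hx : ∀ i, x i = 0 ∨ x i = 1)
    (hfeas : ∀ j, ∑ i, (A j i : ℤ) * x i ≤ (b j : ℤ)) :
    (∑ i ∈ Finset.univ \ unionC C, ext i * x i) + ∑ i, α i * x i ≤ β := by
  classical
  set S : Finset (Fin n) := Finset.univ.filter (fun i => x i = 1) with hSdef
  have hmemS : ∀ i, i ∈ S ↔ x i = 1 := by intro i; rw [hSdef]; simp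
  have hnc : ∀ j, (∑ i ∈ S, (A j i : ℤ)) ≤ (b j : ℤ) := by
    intro j
    have e : ∑ i ∈ S, (A j i : ℤ) = ∑ i, (A j i : ℤ) * x i := by
      rw [hSdef, Finset.sum_filter]
      apply Finset.sum_congr rfl
      intro i _
      rcases hx i with h0 | h0 <;> simp [h0]
    rw [e]; exact hfeas j
  have h1 : ∑ i ∈ Finset.univ \ unionC C, ext i * x i = ∑ i ∈ S \ unionC C, ext i := by
    have e2 : S \ unionC C = (Finset.univ \ unionC C).filter (fun i => x i = 1) := by
      ext y
      simp only [Finset.mem_filter, Finset.mem_sdiff, Finset.mem_univ, true_and, hmemS y]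
      tauto
    rw [e2, Finset.sum_filter]
    apply Finset.sum_congr rfl
    intro i _
    rcases hx i with h0 | h0 <;> simp [h0]
  have h2 : ∑ i, α i * x i = ∑ i ∈ S, α i := by
    rw [hSdef, Finset.sum_filter]
    apply Finset.sum_congr rfl
    intro i _
    rcases hx i with h0 | h0 <;> simp [h0]
  have hsplit := Finset.sum_inter_add_sum_sdiff S (unionC C) α
  have hzero : ∑ i ∈ S \ unionC C, α i = 0 :=
    Finset.sum_eq_zero (fun i hi => hα.1 i (Finset.mem_sdiff.mp hi).2)
  have hmain := ext_lemma hk A b hA C hmc α hα ext hext (S \ unionC C).card S le_rfl hnc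
  rw [hβ, h1, h2]
  linarith
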